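/- Let n ≥ 2. The absolute value of the determinant of r_n satisfies |det(r_n)| = |det(r_2)|^{(n−1)·2^{n−2}} = 2^{(n−1)·2^{n−2}}. -/

import Mathlib

open Matrix

noncomputable section

/-- Kronecker product of square matrices with flat `Fin` indexing
(first factor most significant: `(A ⊗ B)[i*b+r, j*b+s] = A[i,j] * B[r,s]`). -/
def kron {R : Type*} [Mul R] {a b : ℕ} (A : Matrix (Fin a) (Fin a) R)
    (B : Matrix (Fin b) (Fin b) R) : Matrix (Fin (a * b)) (Fin (a * b)) R := fun i j =>
  have hb : 0 < b := Nat.pos_of_ne_zero fun hb0 => by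
    subst hb0; exact absurd i.isLt (by omega)
  A ⟨i.val / b, Nat.div_lt_of_lt_mul (Nat.mul_comm a b ▸ i.isLt)⟩
    ⟨j.val / b, Nat.div_lt_of_lt_mul (Nat.mul_comm a b ▸ j.isLt)⟩ *
  B ⟨i.val % b, Nat.mod_lt _ hb⟩ ⟨j.val % b, Nat.mod_lt _ hb⟩

/-- Kronecker product of (column) vectors with flat `Fin` indexing. -/
def kronV {R : Type*} [Mul R] {a b : ℕ} (u : Fin a → R) (v : Fin b → R) :
    Fin (a * b) → R := fun i =>
  have hb : 0 < b := Nat.pos_of_ne_zero fun hb0 => by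
    subst hb0; exact absurd i.isLt (by omega)
  u ⟨i.val / b, Nat.div_lt_of_lt_mul (Nat.mul_comm a b ▸ i.isLt)⟩ *
  v ⟨i.val % b, Nat.mod_lt _ hb⟩

/-- Transport a square matrix along an equality of sizes. -/
def castM {R : Type*} {a b : ℕ} (h : a = b) (A : Matrix (Fin a) (Fin a) R) :
    Matrix (Fin b) (Fin b) R := fun i j => A (Fin.cast h.symm i) (Fin.cast h.symm j)

/-- Transport a vector along an equality of sizes. -/
def castV {R : Type*} {a b : ℕ} (h : a = b) (u : Fin a → R) : Fin b → R :=
  fun i => u (Fin.cast h.symm i)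

theorem two_pow_pred_mul_two {n : ℕ} (hn : 1 ≤ n) : 2 ^ (n - 1) * 2 = 2 ^ n := by
  rw [← pow_succ]; congr 1; omega

theorem half_lt {n x : ℕ} (hx : x < 2 ^ n) : x / 2 < 2 ^ (n - 1) := by
  rcases Nat.eq_zero_or_pos n with h | h
  · subst h; simp only [pow_zero] at hx ⊢; omega
  · have h2 : (2 : ℕ) ^ (n - 1) * 2 = 2 ^ n := two_pow_pred_mul_two h
    omega

/-- `⌊j/2⌋` as an element of `Fin (2^(n-1))`. -/
def half {n : ℕ} (j : Fin (2 ^ n)) : Fin (2 ^ (n - 1)) := ⟨j.val / 2, half_lt j.isLt⟩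

/-- The index `2i` (1-indexed: `2i-1`). -/
def dbl {n : ℕ} (hn : 1 ≤ n) (i : Fin (2 ^ (n - 1))) : Fin (2 ^ n) :=
  ⟨2 * i.val, by
    have h1 := i.isLt
    have h2 : (2 : ℕ) ^ (n - 1) * 2 = 2 ^ n := two_pow_pred_mul_two hn
    omega⟩

/-- The index `2i+1` (1-indexed: `2i`). -/
def dbl1 {n : ℕ} (hn : 1 ≤ n) (i : Fin (2 ^ (n - 1))) : Fin (2 ^ n) :=
  ⟨2 * i.val + 1, by
    have h1 := i.isLt
    have h2 : (2 : ℕ) ^ (n - 1) * 2 = 2 ^ n := two_pow_pred_mul_two hn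
    omega⟩

/-- The identity matrix `I_m` over `ℂ`. -/
def idM (m : ℕ) : Matrix (Fin m) (Fin m) ℂ := 1

/-- The 2×2 identity matrix `I_2`. -/
def I2 : Matrix (Fin 2) (Fin 2) ℂ := 1

/-- The Pauli matrix `X = [[0,1],[1,0]]`. -/
def pauliX : Matrix (Fin 2) (Fin 2) ℂ := !![0, 1; 1, 0]

/-- The projector `π₀ = [[1,0],[0,0]]`. -/
def proj0 : Matrix (Fin 2) (Fin 2) ℂ := !![1, 0; 0, 0]

/-- The projector `π₁ = [[0,0],[0,1]]`. -/
def proj1 : Matrix (Fin 2) (Fin 2) ℂ := !![0, 0; 0, 1]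

/-- `D₁(φ) = diag(e^{iφ}, e^{-iφ})`. -/
def D1 (φ : ℝ) : Matrix (Fin 2) (Fin 2) ℂ :=
  !![Complex.exp (Complex.I * (φ : ℂ)), 0; 0, Complex.exp (-(Complex.I * (φ : ℂ)))]

/-- `D_m(α) = diag(e^{iα₁}, …, e^{iα_{2^m}})`. -/
def Dm (m : ℕ) (α : Fin (2 ^ m) → ℝ) : Matrix (Fin (2 ^ m)) (Fin (2 ^ m)) ℂ :=
  Matrix.diagonal fun j => Complex.exp (Complex.I * (α j : ℂ))

/-- The control matrix
`L(k) = I^{⊗(k-1)} ⊗ π₀ ⊗ I^{⊗(n-k)} + I^{⊗(k-1)} ⊗ π₁ ⊗ I^{⊗(n-k-1)} ⊗ X`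
(defined to be the identity for `k` outside `{1,…,n-1}`). -/
def Lmat (n k : ℕ) : Matrix (Fin (2 ^ n)) (Fin (2 ^ n)) ℂ :=
  if h : 1 ≤ k ∧ k < n then
    castM (by rw [← pow_succ, ← pow_add]; congr 1; omega)
      (kron (kron (idM (2 ^ (k - 1))) proj0) (idM (2 ^ (n - k)))) +
    castM (by rw [← pow_succ, ← pow_add, ← pow_succ]; congr 1; omega)
      (kron (kron (kron (idM (2 ^ (k - 1))) proj1) (idM (2 ^ (n - k - 1)))) pauliX)
  else 1

/-- The half of the binary-tree sequence: `a_2 = (1)`,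
`a_m = (a_{m-1}+1) ∘ (1) ∘ (a_{m-1}+1)`. -/
def aSeq : ℕ → List ℕ
  | 0 => []
  | 1 => []
  | 2 => [1]
  | n + 3 => ((aSeq (n + 2)).map (· + 1)) ++ [1] ++ ((aSeq (n + 2)).map (· + 1))

/-- The binary-tree sequence `A_n = a_n ∘ (1)`. -/
def ASeq (n : ℕ) : List ℕ := aSeq n ++ [1]

/-- The all-ones vector `[1,1]^{⊗k}` (of arbitrary length). -/
def onesV (m : ℕ) : Fin m → ℝ := fun _ => 1

/-- The vector `[1,-1]`. -/
def signV : Fin 2 → ℝ := ![1, -1]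

/-- `v_m = [1,1]^{⊗(m-1)} ⊗ [1,-1] ⊗ [1,1]^{⊗(n-1-m)}`
(defined to be all-ones for `m` outside `{1,…,n-1}`). -/
def vvec (n m : ℕ) : Fin (2 ^ (n - 1)) → ℝ :=
  if h : 1 ≤ m ∧ m ≤ n - 1 then
    castV (by rw [← pow_succ, ← pow_add]; congr 1; omega)
      (kronV (kronV (onesV (2 ^ (m - 1))) signV) (onesV (2 ^ (n - 1 - m))))
  else onesV _

/-- The matrix `r_n`: its `i`-th column is the entrywise product
`∏_{k=1}^{i-1} v_{A_n(k)}`.  (`rMat n j i` is the `(j,i)` entry, `i` the column.) -/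
def rMat (n : ℕ) : Matrix (Fin (2 ^ (n - 1))) (Fin (2 ^ (n - 1))) ℝ :=
  fun j i => ∏ k ∈ Finset.range i.val, vvec n ((ASeq n).getD k 1) j

/-- `r_2 = [[1,1],[1,-1]]`. -/
def r2 : Matrix (Fin 2) (Fin 2) ℝ := !![1, 1; 1, -1]

/-- The `m`-fold Kronecker power `r_2^{⊗m}`. -/
def r2pow : (m : ℕ) → Matrix (Fin (2 ^ m)) (Fin (2 ^ m)) ℝ
  | 0 => 1
  | m + 1 => castM (pow_succ 2 m).symm (kron (r2pow m) r2)

/-- The block-diagonal matrix with 2×2 blocks `D₁(γ₁), …, D₁(γ_{2^{n-1}})`. -/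
def blockD1 (n : ℕ) (γ : Fin (2 ^ (n - 1)) → ℝ) :
    Matrix (Fin (2 ^ n)) (Fin (2 ^ n)) ℂ := fun x y =>
  if x.val / 2 = y.val / 2 then
    D1 (γ (half x)) ⟨x.val % 2, Nat.mod_lt _ (by norm_num)⟩
      ⟨y.val % 2, Nat.mod_lt _ (by norm_num)⟩
  else 0


section Aux


inductive GoodL : List ℕ → Prop
  | base : GoodL [1]
  | step {l : List ℕ} : GoodL l → GoodL (l.map (· + 1) ++ 1 :: l.map (· + 1))

lemma GoodL.pos {l : List ℕ} (h : GoodL l) : ∀ x ∈ l, 1 ≤ x := by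
  induction h with
  | base => intro x hx; simp at hx; omega
  | step h ih =>
    intro x hx
    simp only [List.mem_append, List.mem_cons, List.mem_map] at hx
    rcases hx with ⟨y, _, rfl⟩ | rfl | ⟨y, _, rfl⟩ <;> omega

lemma count_map_succ (l : List ℕ) (m : ℕ) :
    (l.map (· + 1)).count (m + 1) = l.count m :=
  List.count_map_of_injective l (· + 1) (add_left_injective 1) m

lemma count_one_map_succ (l : List ℕ) (h : ∀ x ∈ l, 1 ≤ x) :
    (l.map (· + 1)).count 1 = 0 := by
  rw [List.count_eq_zero]
  intro hmem
  obtain ⟨y, hy, hh⟩ := List.mem_map.mp hmem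
  have := h y hy; omega

lemma GoodL.gray {l : List ℕ} (h : GoodL l) :
    ∀ i i', i ≤ l.length → i' ≤ l.length →
      (∀ m : ℕ, (((l.take i).count m : ZMod 2)) = ((l.take i').count m : ZMod 2)) →
      i = i' := by
  induction h with
  | base =>
    intro i i' hi hi' hc
    simp only [List.length_singleton] at hi hi'
    interval_cases i <;> interval_cases i' <;> first
      | rfl
      | (exfalso; have := hc 1; simp at this)
  | @step l hg ih =>
    intro i i' hi hi' hc
    set b := l.map (· + 1) with hb
    have hlb : b.length = l.length := List.length_map _
    have hlen : (b ++ 1 :: b).length = 2 * l.length + 1 := by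
      simp [hlb]; omega
    rw [hlen] at hi hi'
    have hbpos : ∀ x ∈ b, 1 ≤ x := fun x hx => by
      simp only [hb, List.mem_map] at hx; rcases hx with ⟨y, _, rfl⟩; omega
    -- count of take for the two regimes
    have htake_lo : ∀ t, t ≤ l.length → (b ++ 1 :: b).take t = (l.take t).map (· + 1) := by
      intro t ht
      rw [List.take_append_of_le_length (by omega), hb, List.map_take]
    have htake_hi : ∀ t, (b ++ 1 :: b).take (l.length + 1 + t) =
        b ++ 1 :: (l.take t).map (· + 1) := by
      intro t
      have h1 : l.length + 1 + t = b.length + (t + 1) := by omega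
      rw [h1, List.take_length_add_append, List.take_succ_cons, hb, List.map_take]
    have hposk : ∀ t, ∀ x ∈ l.take t, 1 ≤ x := fun t x hx => hg.pos x (List.mem_of_mem_take hx)
    have hcnt1_lo : ∀ t, t ≤ l.length → ((b ++ 1 :: b).take t).count 1 = 0 := by
      intro t ht
      rw [htake_lo t ht]
      exact count_one_map_succ _ (hposk t)
    have hb1 : b.count 1 = 0 := count_one_map_succ l hg.pos
    have hcnt1_hi : ∀ t, ((b ++ 1 :: b).take (l.length + 1 + t)).count 1 = 1 := by
      intro t
      rw [htake_hi t, List.count_append, hb1]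
      have h0 : List.count 1 (List.map (· + 1) (l.take t)) = 0 :=
        count_one_map_succ _ (hposk t)
      simp [List.count_cons, ← List.map_take, h0]
    have hcnt_lo : ∀ t, t ≤ l.length → ∀ m : ℕ,
        ((b ++ 1 :: b).take t).count (m + 1) = (l.take t).count m := by
      intro t ht m
      rw [htake_lo t ht, count_map_succ]
    have hcnt_hi : ∀ t (m : ℕ),
        ((b ++ 1 :: b).take (l.length + 1 + t)).count (m + 1)
          = b.count (m + 1) + (if (1:ℕ) = m + 1 then 1 else 0) + (l.take t).count m := by
      intro t m
      rw [htake_hi t, List.count_append, List.count_cons]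
      have h2 := count_map_succ (l.take t) m
      rw [h2, count_map_succ]
      simp only [beq_iff_eq]
      split_ifs <;> ring
    rcases le_or_gt i l.length with hiLo | hiHi <;> rcases le_or_gt i' l.length with hiLo' | hiHi'
    · -- both low
      apply ih i i' hiLo hiLo'
      intro m
      have := hc (m + 1)
      rwa [hcnt_lo i hiLo m, hcnt_lo i' hiLo' m] at this
    · -- i low, i' high
      exfalso
      obtain ⟨t, rfl⟩ : ∃ t, i' = l.length + 1 + t := ⟨i' - (l.length + 1), by omega⟩
      have := hc 1
      rw [hcnt1_lo i hiLo, hcnt1_hi t] at this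
      simp at this
    · -- i high, i' low
      exfalso
      obtain ⟨t, rfl⟩ : ∃ t, i = l.length + 1 + t := ⟨i - (l.length + 1), by omega⟩
      have := hc 1
      rw [hcnt1_lo i' hiLo', hcnt1_hi t] at this
      simp at this
    · -- both high
      obtain ⟨t, rfl⟩ : ∃ t, i = l.length + 1 + t := ⟨i - (l.length + 1), by omega⟩
      obtain ⟨t', rfl⟩ : ∃ t', i' = l.length + 1 + t' := ⟨i' - (l.length + 1), by omega⟩
      have ht : t ≤ l.length := by omega
      have ht' : t' ≤ l.length := by omega
      have : t = t' := by
        apply ih t t' ht ht'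
        intro m
        have := hc (m + 1)
        rw [hcnt_hi t m, hcnt_hi t' m] at this
        push_cast at this
        exact add_left_cancel this
      omega


lemma aSeq_good : ∀ n : ℕ, GoodL (aSeq (n + 2)) := by
  intro n
  induction n with
  | zero => exact GoodL.base
  | succ k ih =>
    have h : aSeq (k + 3) = (aSeq (k + 2)).map (· + 1) ++ 1 :: (aSeq (k + 2)).map (· + 1) := by
      simp [aSeq]
    rw [h]
    exact ih.step

lemma aSeq_length : ∀ n : ℕ, (aSeq n).length = 2 ^ (n - 1) - 1
  | 0 => rfl
  | 1 => rfl
  | 2 => rfl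
  | n + 3 => by
    have ih := aSeq_length (n + 2)
    simp only [show n + 2 - 1 = n + 1 from rfl] at ih
    have h2 : (2:ℕ) ^ (n + 2) = 2 * 2 ^ (n + 1) := by ring
    have h0 : (0:ℕ) < 2 ^ (n + 1) := Nat.pow_pos (by norm_num)
    simp only [aSeq, List.length_append, List.length_map, List.length_cons,
      List.length_nil, ih, show n + 3 - 1 = n + 2 from rfl]
    omega

lemma aSeq_mem : ∀ n : ℕ, ∀ x ∈ aSeq n, 1 ≤ x ∧ x ≤ n - 1
  | 0 => by intro x hx; simp [aSeq] at hx
  | 1 => by intro x hx; simp [aSeq] at hx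
  | 2 => by intro x hx; simp [aSeq] at hx; omega
  | n + 3 => by
    intro x hx
    have ih := aSeq_mem (n + 2)
    simp only [aSeq, List.mem_append, List.mem_cons, List.mem_map,
      List.mem_singleton, List.not_mem_nil, or_false] at hx
    rcases hx with (⟨y, hy, rfl⟩ | rfl) | ⟨y, hy, rfl⟩
    · have := ih y hy; omega
    · omega
    · have := ih y hy; omega

lemma ASeq_length (n : ℕ) : (ASeq n).length = 2 ^ (n - 1) := by
  have h0 : (0:ℕ) < 2 ^ (n - 1) := Nat.pow_pos (by norm_num)
  rw [ASeq, List.length_append, aSeq_length n]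
  simp only [List.length_singleton]
  omega

lemma ASeq_getD_bounds (n : ℕ) (hn : 2 ≤ n) (k : ℕ) :
    1 ≤ (ASeq n).getD k 1 ∧ (ASeq n).getD k 1 ≤ n - 1 := by
  by_cases h : k < (ASeq n).length
  · rw [List.getD_eq_getElem _ _ h]
    set v := (ASeq n)[k] with hv
    have hmem : v ∈ ASeq n := List.getElem_mem h
    simp only [ASeq, List.mem_append, List.mem_cons, List.not_mem_nil, or_false] at hmem
    rcases hmem with hmem | h1
    · exact aSeq_mem n _ hmem
    · omega
  · rw [List.getD_eq_default _ _ (Nat.le_of_not_lt h)]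
    omega

lemma card_filter_range_getD (l : List ℕ) (d m : ℕ) :
    ∀ i, i ≤ l.length →
      ((Finset.range i).filter (fun k => l.getD k d = m)).card = (l.take i).count m := by
  intro i
  induction i with
  | zero => simp
  | succ t ih =>
    intro ht
    have ht' : t < l.length := by omega
    rw [Finset.range_add_one, Finset.filter_insert]
    have htake : l.take (t + 1) = l.take t ++ [l[t]] := by
      rw [List.take_add_one]
      congr 1
      rw [List.getElem?_eq_getElem ht']
      rfl
    rw [htake, List.count_append]
    have hget : l.getD t d = l[t] := List.getD_eq_getElem _ _ ht'
    by_cases hc : l.getD t d = m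
    · have h1 : List.count m [l[t]] = 1 := by
        rw [← hget, hc]; simp
      rw [if_pos hc, Finset.card_insert_of_notMem (by simp), ih (by omega), h1]
    · have h0 : List.count m [l[t]] = 0 := by
        rw [List.count_eq_zero]
        simp only [List.mem_singleton]
        intro hmm; exact hc (by rw [hget, ← hmm])
      rw [if_neg hc, ih (by omega), h0]
      omega

lemma sum_range_two_mul' (M : ℕ) (f : ℕ → ℝ) :
    ∑ j ∈ Finset.range (2 * M), f j = ∑ a ∈ Finset.range M, (f (2 * a) + f (2 * a + 1)) := by
  induction M with
  | zero => simp
  | succ k ih =>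
    have h : 2 * (k + 1) = 2 * k + 1 + 1 := by ring
    rw [h, Finset.sum_range_succ, Finset.sum_range_succ, ih, Finset.sum_range_succ,
      add_assoc]

lemma sum_char : ∀ N : ℕ, ∀ c : ℕ → ℕ, (∃ b, b < N ∧ Odd (c b)) →
    ∑ j ∈ Finset.range (2 ^ N), ∏ b ∈ Finset.range N, ((-1 : ℝ)) ^ (c b * (j / 2 ^ b)) = 0 := by
  intro N
  induction N with
  | zero => rintro c ⟨b, hb, -⟩; omega
  | succ M ih =>
    rintro c ⟨b, hb, hodd⟩
    have h2 : (2:ℕ) ^ (M + 1) = 2 * 2 ^ M := by ring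
    rw [h2, sum_range_two_mul']
    have hsplit : ∀ j : ℕ, ∏ b ∈ Finset.range (M + 1), ((-1 : ℝ)) ^ (c b * (j / 2 ^ b))
        = (∏ b ∈ Finset.range M, ((-1 : ℝ)) ^ (c (b + 1) * ((j / 2) / 2 ^ b))) *
          (-1 : ℝ) ^ (c 0 * j) := by
      intro j
      rw [Finset.prod_range_succ']
      congr 1
      · apply Finset.prod_congr rfl
        intro b _
        congr 2
        rw [Nat.div_div_eq_div_mul]
        congr 1
        ring
      · simp
    by_cases hc0 : Odd (c 0)
    · apply Finset.sum_eq_zero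
      intro a _
      rw [hsplit, hsplit]
      have e1 : (2 * a) / 2 = a := by omega
      have e2 : (2 * a + 1) / 2 = a := by omega
      rw [e1, e2]
      have o1 : Even (c 0 * (2 * a)) := by
        apply Even.mul_left; exact ⟨a, by ring⟩
      have o2 : Odd (c 0 * (2 * a + 1)) := hc0.mul ⟨a, by ring⟩
      rw [o1.neg_one_pow, o2.neg_one_pow]
      ring
    · have hceven : Even (c 0) := Nat.not_odd_iff_even.mp hc0
      have hb' : b ≠ 0 := fun h => hc0 (h ▸ hodd)
      obtain ⟨b', rfl⟩ : ∃ b', b = b' + 1 := ⟨b - 1, by omega⟩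
      have ihs := ih (fun b => c (b + 1)) ⟨b', by omega, hodd⟩
      have : ∀ a ∈ Finset.range (2 ^ M),
          (∏ b ∈ Finset.range (M + 1), ((-1 : ℝ)) ^ (c b * ((2 * a) / 2 ^ b))) +
          (∏ b ∈ Finset.range (M + 1), ((-1 : ℝ)) ^ (c b * ((2 * a + 1) / 2 ^ b)))
          = 2 * ∏ b ∈ Finset.range M, ((-1 : ℝ)) ^ (c (b + 1) * (a / 2 ^ b)) := by
        intro a _
        rw [hsplit, hsplit]
        have e1 : (2 * a) / 2 = a := by omega
        have e2 : (2 * a + 1) / 2 = a := by omega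
        rw [e1, e2]
        rw [(hceven.mul_right (2 * a)).neg_one_pow, (hceven.mul_right (2 * a + 1)).neg_one_pow]
        ring
      rw [Finset.sum_congr rfl this, ← Finset.mul_sum, ihs, mul_zero]


lemma signV_mk (q : ℕ) (h : q % 2 < 2) : signV ⟨q % 2, h⟩ = (-1 : ℝ) ^ q := by
  rcases Nat.even_or_odd q with he | ho
  · have h0 : q % 2 = 0 := Nat.even_iff.mp he
    rw [show (⟨q % 2, h⟩ : Fin 2) = 0 from by simp [Fin.ext_iff, h0]]
    simp [signV, he.neg_one_pow]
  · have h1 : q % 2 = 1 := Nat.odd_iff.mp ho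
    rw [show (⟨q % 2, h⟩ : Fin 2) = 1 from by simp [Fin.ext_iff, h1]]
    simp [signV, ho.neg_one_pow]

lemma vvec_apply (n m : ℕ) (hm1 : 1 ≤ m) (hm2 : m ≤ n - 1) (j : Fin (2 ^ (n - 1))) :
    vvec n m j = (-1 : ℝ) ^ (j.val / 2 ^ (n - 1 - m)) := by
  rw [vvec, dif_pos (⟨hm1, hm2⟩ : 1 ≤ m ∧ m ≤ n - 1)]
  simp only [castV, kronV, onesV, one_mul, mul_one, Fin.coe_cast]
  exact signV_mk _ _

lemma rMat_apply (n : ℕ) (hn : 2 ≤ n) (j i : Fin (2 ^ (n - 1))) :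
    rMat n j i = ∏ k ∈ Finset.range i.val,
      (-1 : ℝ) ^ (j.val / 2 ^ (n - 1 - (ASeq n).getD k 1)) := by
  rw [rMat]
  apply Finset.prod_congr rfl
  intro k _
  exact vvec_apply n _ (ASeq_getD_bounds n hn k).1 (ASeq_getD_bounds n hn k).2 j

lemma rMat_mul_self (n : ℕ) (hn : 2 ≤ n) (i j : Fin (2 ^ (n - 1))) :
    rMat n j i * rMat n j i = 1 := by
  rw [rMat_apply n hn, ← Finset.prod_mul_distrib]
  apply Finset.prod_eq_one
  intro k _
  rw [← pow_add]
  exact Even.neg_one_pow ⟨_, rfl⟩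

lemma rMat_diag (n : ℕ) (hn : 2 ≤ n) (i : Fin (2 ^ (n - 1))) :
    ∑ j : Fin (2 ^ (n - 1)), rMat n j i * rMat n j i = (2 : ℝ) ^ (n - 1) := by
  rw [Finset.sum_congr rfl (fun j _ => rMat_mul_self n hn i j)]
  simp [Finset.card_univ]

lemma rMat_offdiag (n : ℕ) (hn : 2 ≤ n) (i i' : Fin (2 ^ (n - 1))) (h : i.val < i'.val) :
    ∑ j : Fin (2 ^ (n - 1)), rMat n j i * rMat n j i' = 0 := by
  have hAb : ∀ k, 1 ≤ (ASeq n).getD k 1 ∧ (ASeq n).getD k 1 ≤ n - 1 := ASeq_getD_bounds n hn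
  -- step 1: express products over the segment
  have hseg : ∀ j : Fin (2 ^ (n - 1)),
      rMat n j i * rMat n j i' =
      ∏ k ∈ Finset.Ico i.val i'.val,
        (-1 : ℝ) ^ (j.val / 2 ^ (n - 1 - (ASeq n).getD k 1)) := by
    intro j
    rw [rMat_apply n hn j i, rMat_apply n hn j i',
      ← Finset.prod_range_mul_prod_Ico _ (le_of_lt h), ← mul_assoc,
      ← Finset.prod_mul_distrib]
    have hP : (∏ k ∈ Finset.range i.val,
        (-1 : ℝ) ^ (j.val / 2 ^ (n - 1 - (ASeq n).getD k 1)) *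
        (-1 : ℝ) ^ (j.val / 2 ^ (n - 1 - (ASeq n).getD k 1))) = 1 := by
      apply Finset.prod_eq_one
      intro k _
      rw [← pow_add]
      exact Even.neg_one_pow ⟨_, rfl⟩
    rw [hP, one_mul]
  -- the fiber counts
  set c : ℕ → ℕ := fun b =>
    ((Finset.Ico i.val i'.val).filter (fun k => n - 1 - (ASeq n).getD k 1 = b)).card with hc
  -- step 2: fiberwise regrouping
  have hfib : ∀ v : Fin (2 ^ (n - 1)),
      (∏ k ∈ Finset.Ico i.val i'.val,
        (-1 : ℝ) ^ (v.val / 2 ^ (n - 1 - (ASeq n).getD k 1)))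
      = ∏ b ∈ Finset.range (n - 1), (-1 : ℝ) ^ (c b * (v.val / 2 ^ b)) := by
    intro v
    have hmaps : ∀ k ∈ Finset.Ico i.val i'.val,
        n - 1 - (ASeq n).getD k 1 ∈ Finset.range (n - 1) := by
      intro k _
      have := hAb k
      simp only [Finset.mem_range]
      omega
    rw [← Finset.prod_fiberwise_of_maps_to hmaps
      (fun k => (-1 : ℝ) ^ (v.val / 2 ^ (n - 1 - (ASeq n).getD k 1)))]
    apply Finset.prod_congr rfl
    intro b _
    have hinner : ∀ k ∈ (Finset.Ico i.val i'.val).filter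
        (fun k => n - 1 - (ASeq n).getD k 1 = b),
        (-1 : ℝ) ^ (v.val / 2 ^ (n - 1 - (ASeq n).getD k 1)) = (-1 : ℝ) ^ (v.val / 2 ^ b) := by
      intro k hk
      rw [(Finset.mem_filter.mp hk).2]
    rw [Finset.prod_congr rfl hinner, Finset.prod_const, ← pow_mul, mul_comm]
  -- step 3: existence of an odd fiber
  have hodd : ∃ b, b < n - 1 ∧ Odd (c b) := by
    by_contra hcon
    push_neg at hcon
    have heven : ∀ b, b < n - 1 → Even (c b) := fun b hb =>
      Nat.not_odd_iff_even.mp (hcon b hb)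
    have hevenm : ∀ m : ℕ,
        Even (((Finset.Ico i.val i'.val).filter (fun k => (ASeq n).getD k 1 = m)).card) := by
      intro m
      by_cases hm : 1 ≤ m ∧ m ≤ n - 1
      · have heq : (Finset.Ico i.val i'.val).filter (fun k => (ASeq n).getD k 1 = m)
            = (Finset.Ico i.val i'.val).filter
                (fun k => n - 1 - (ASeq n).getD k 1 = n - 1 - m) := by
          apply Finset.filter_congr
          intro k _
          have := hAb k
          constructor <;> intro hh <;> omega
        rw [heq]
        exact heven (n - 1 - m) (by omega)
      · have hempty : (Finset.Ico i.val i'.val).filter (fun k => (ASeq n).getD k 1 = m) = ∅ := by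
          apply Finset.filter_eq_empty_iff.mpr
          intro k _
          have := hAb k
          omega
        rw [hempty]
        simp
    have hsplit : ∀ m : ℕ,
        ((Finset.range i'.val).filter (fun k => (ASeq n).getD k 1 = m)).card
        = ((Finset.range i.val).filter (fun k => (ASeq n).getD k 1 = m)).card
          + ((Finset.Ico i.val i'.val).filter (fun k => (ASeq n).getD k 1 = m)).card := by
      intro m
      rw [← Finset.card_union_of_disjoint, ← Finset.filter_union]
      · congr 1
        rw [Finset.range_eq_Ico, Finset.range_eq_Ico,
          Finset.Ico_union_Ico_eq_Ico (Nat.zero_le _) (le_of_lt h)]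
      · apply Finset.disjoint_filter_filter
        simp only [Finset.disjoint_left, Finset.mem_range, Finset.mem_Ico]
        omega
    have hcnt : ∀ m : ℕ,
        ((((ASeq n).take i.val).count m : ZMod 2)) = (((ASeq n).take i'.val).count m) := by
      intro m
      rw [← card_filter_range_getD (ASeq n) 1 m i.val (by rw [ASeq_length]; omega),
          ← card_filter_range_getD (ASeq n) 1 m i'.val (by rw [ASeq_length]; omega),
          hsplit m]
      obtain ⟨r, hr⟩ := hevenm m
      rw [hr]
      push_cast
      have h2 : ((r : ZMod 2) + r) = 0 := by
        rw [← two_mul, show (2 : ZMod 2) = 0 from by decide, zero_mul]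
      rw [h2, add_zero]
    have hlen := aSeq_length n
    have hi'lt := i'.isLt
    have hiLe : i.val ≤ (aSeq n).length := by omega
    have hiLe' : i'.val ≤ (aSeq n).length := by omega
    have htk : ∀ t, t ≤ (aSeq n).length → (ASeq n).take t = (aSeq n).take t := by
      intro t ht
      rw [ASeq, List.take_append_of_le_length ht]
    have hgood : GoodL (aSeq n) := by
      have := aSeq_good (n - 2)
      rwa [show n - 2 + 2 = n from by omega] at this
    have := hgood.gray i.val i'.val hiLe hiLe'
      (fun m => by rw [← htk _ hiLe, ← htk _ hiLe']; exact hcnt m)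
    omega
  -- step 4: put it together
  calc ∑ j : Fin (2 ^ (n - 1)), rMat n j i * rMat n j i'
      = ∑ j : Fin (2 ^ (n - 1)), ∏ b ∈ Finset.range (n - 1),
          (-1 : ℝ) ^ (c b * (j.val / 2 ^ b)) :=
        Finset.sum_congr rfl (fun j _ => by rw [hseg j, hfib j])
    _ = ∑ j ∈ Finset.range (2 ^ (n - 1)), ∏ b ∈ Finset.range (n - 1),
          (-1 : ℝ) ^ (c b * (j / 2 ^ b)) :=
        Fin.sum_univ_eq_sum_range
          (fun v => ∏ b ∈ Finset.range (n - 1), (-1 : ℝ) ^ (c b * (v / 2 ^ b))) (2 ^ (n - 1))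
    _ = 0 := sum_char (n - 1) c hodd

lemma rMat_gram (n : ℕ) (hn : 2 ≤ n) :
    (rMat n)ᵀ * rMat n
      = ((2 : ℝ) ^ (n - 1)) • (1 : Matrix (Fin (2 ^ (n - 1))) (Fin (2 ^ (n - 1))) ℝ) := by
  ext i i'
  rw [Matrix.mul_apply]
  simp only [Matrix.transpose_apply, Matrix.smul_apply, Matrix.one_apply, smul_eq_mul]
  rcases lt_trichotomy i.val i'.val with hlt | heq | hgt
  · rw [if_neg (fun hh => by rw [hh] at hlt; omega), mul_zero]
    exact rMat_offdiag n hn i i' hlt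
  · have hee : i = i' := Fin.ext heq
    subst hee
    rw [if_pos rfl, mul_one]
    exact rMat_diag n hn i
  · rw [if_neg (fun hh => by rw [hh] at hgt; omega), mul_zero]
    calc ∑ j, rMat n j i * rMat n j i' = ∑ j, rMat n j i' * rMat n j i := by
          simp [mul_comm]
      _ = 0 := rMat_offdiag n hn i' i hgt

end Aux

theorem stmt9 (n : ℕ) (hn : 2 ≤ n) :
    |(rMat n).det| = |r2.det| ^ ((n - 1) * 2 ^ (n - 2)) ∧
    |(rMat n).det| = 2 ^ ((n - 1) * 2 ^ (n - 2)) := by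
  have hr2 : |r2.det| = 2 := by
    have hd : r2.det = -2 := by
      rw [r2, Matrix.det_fin_two_of]; norm_num
    rw [hd]; norm_num
  have hg := congrArg Matrix.det (rMat_gram n hn)
  rw [Matrix.det_mul, Matrix.det_transpose, Matrix.det_smul, Matrix.det_one, mul_one,
    Fintype.card_fin] at hg
  have hsq : (rMat n).det ^ 2 = ((2 : ℝ) ^ ((n - 1) * 2 ^ (n - 2))) ^ 2 := by
    rw [sq, hg, ← pow_mul, ← pow_mul]
    congr 1
    have h1 : (2 : ℕ) ^ (n - 2) * 2 = 2 ^ (n - 1) := by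
      rw [← pow_succ]; congr 1; omega
    rw [mul_assoc, h1]
  have habs : |(rMat n).det| = 2 ^ ((n - 1) * 2 ^ (n - 2)) := by
    have h1 := (sq_eq_sq_iff_abs_eq_abs _ _).mp hsq
    have hpos : (0:ℝ) < 2 ^ ((n - 1) * 2 ^ (n - 2)) :=
      pow_pos (by norm_num) _
    rwa [abs_of_pos hpos] at h1
  exact ⟨by rw [habs, hr2], habs⟩

end
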